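/- For positive definite real symmetric matrices W and Q of the same size and a real matrix U, the trace norm satisfies ‖√W Q⁻¹ U Q⁻¹ √W‖₁ ≤ ‖Q^{-1/2} W Q^{-1/2}‖₁ · ‖Q^{-1/2} U Q^{-1/2}‖_∞, where ‖·‖₁ is the trace norm (sum of singular values), ‖·‖_∞ the operator norm, and √W, Q^{-1/2} the positive square roots. -/

import Mathlib

open Matrix

/-- the positive semidefinite square root (Mathlib's former `Matrix.PosSemidef.sqrt`) -/
noncomputable def Matrix.PosSemidef.sqrt {n : Type*} [Fintype n] [DecidableEq n]
    {A : Matrix n n ℝ} (hA : A.PosSemidef) : Matrix n n ℝ :=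
  hA.1.eigenvectorUnitary.1 * diagonal ((↑) ∘ (Real.sqrt ·) ∘ hA.1.eigenvalues) *
  (star hA.1.eigenvectorUnitary : Matrix n n ℝ)

theorem Matrix.PosSemidef.posSemidef_sqrt {n : Type*} [Fintype n] [DecidableEq n]
    {A : Matrix n n ℝ} (hA : A.PosSemidef) : hA.sqrt.PosSemidef := by
  unfold Matrix.PosSemidef.sqrt
  rw [Matrix.star_eq_conjTranspose]
  apply Matrix.PosSemidef.mul_mul_conjTranspose_same
  rw [Matrix.posSemidef_diagonal_iff]
  intro i
  simp [Real.sqrt_nonneg]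

noncomputable def traceNorm {n : ℕ} (A : Matrix (Fin n) (Fin n) ℝ) : ℝ :=
  (Matrix.posSemidef_conjTranspose_mul_self A).sqrt.trace

noncomputable def singVals {n : ℕ} (A : Matrix (Fin n) (Fin n) ℝ) : Fin n → ℝ :=
  (Matrix.posSemidef_conjTranspose_mul_self A).posSemidef_sqrt.1.eigenvalues

noncomputable def opNorm {n : ℕ} (A : Matrix (Fin n) (Fin n) ℝ) : ℝ :=
  ⨆ i, singVals A i

/-- the positive semidefinite square root, extended by `0` off psd matrices -/
noncomputable def mySqrt {n : ℕ} (A : Matrix (Fin n) (Fin n) ℝ) : Matrix (Fin n) (Fin n) ℝ :=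
  open Classical in
  if h : A.PosSemidef then h.sqrt else 0

/-- the weight-dependent incompatibility measure `T[W]` -/
noncomputable def Tmeas {n : ℕ} (W Q U : Matrix (Fin n) (Fin n) ℝ) : ℝ :=
  traceNorm (mySqrt W * Q⁻¹ * U * Q⁻¹ * mySqrt W) / (W * Q⁻¹).trace

/-- the quantumness measure `R` -/
noncomputable def Rmeas {n : ℕ} (Q U : Matrix (Fin n) (Fin n) ℝ) : ℝ :=
  opNorm (mySqrt Q⁻¹ * U * mySqrt Q⁻¹)

open scoped MatrixOrder in
lemma Matrix.PosSemidef.sqrt_eq_CFC {n : Type*} [Fintype n] [DecidableEq n]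
    {A : Matrix n n ℝ} (hA : A.PosSemidef) : hA.sqrt = CFC.sqrt A := by
  rw [CFC.sqrt_eq_real_sqrt A hA.nonneg, cfcₙ_eq_cfc, hA.1.cfc_eq]
  rfl

open scoped MatrixOrder in
lemma Matrix.PosSemidef.sqrt_mul_self {n : Type*} [Fintype n] [DecidableEq n]
    {A : Matrix n n ℝ} (hA : A.PosSemidef) : hA.sqrt * hA.sqrt = A := by
  rw [hA.sqrt_eq_CFC]
  exact CFC.sqrt_mul_sqrt_self A hA.nonneg

open scoped MatrixOrder in
lemma Matrix.PosSemidef.eq_sqrt_of_sq_eq {n : Type*} [Fintype n] [DecidableEq n]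
    {A : Matrix n n ℝ} (hA : A.PosSemidef) {B : Matrix n n ℝ} (hB : B.PosSemidef)
    (h : A ^ 2 = B) : A = hB.sqrt := by
  rw [hB.sqrt_eq_CFC, eq_comm, CFC.sqrt_eq_iff _ _ hB.nonneg hA.nonneg, ← sq, h]

/- ======================= auxiliary development ======================= -/

lemma traceNorm_eq_sum_sqrt {n : ℕ} (A : Matrix (Fin n) (Fin n) ℝ) :
    traceNorm A = ∑ i, Real.sqrt ((Matrix.posSemidef_conjTranspose_mul_self A).1.eigenvalues i) := by
  set h := Matrix.posSemidef_conjTranspose_mul_self A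
  have hs : h.sqrt = (h.1.eigenvectorUnitary : Matrix (Fin n) (Fin n) ℝ) *
      diagonal ((↑) ∘ Real.sqrt ∘ h.1.eigenvalues) *
      (star h.1.eigenvectorUnitary : Matrix (Fin n) (Fin n) ℝ) := rfl
  rw [traceNorm, hs, trace_mul_comm, ← mul_assoc,
    Matrix.mem_unitaryGroup_iff'.mp h.1.eigenvectorUnitary.2, one_mul, trace_diagonal]
  rfl

lemma traceNorm_of_posSemidef {n : ℕ} {C : Matrix (Fin n) (Fin n) ℝ} (hC : C.PosSemidef) :
    traceNorm C = C.trace := by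
  have h := Matrix.posSemidef_conjTranspose_mul_self C
  have hCs : C = h.sqrt := hC.eq_sqrt_of_sq_eq h (by rw [pow_two]; nth_rewrite 1 [← hC.1]; rfl)
  rw [traceNorm, ← hCs]

lemma singVals_nonneg {n : ℕ} (A : Matrix (Fin n) (Fin n) ℝ) (i : Fin n) : 0 ≤ singVals A i :=
  (Matrix.posSemidef_conjTranspose_mul_self A).posSemidef_sqrt.eigenvalues_nonneg i

lemma singVals_le_opNorm {n : ℕ} (A : Matrix (Fin n) (Fin n) ℝ) (i : Fin n) :
    singVals A i ≤ opNorm A :=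
  le_ciSup (Set.Finite.bddAbove (Set.finite_range _)) i

lemma opNorm_nonneg {n : ℕ} (hn : 0 < n) (A : Matrix (Fin n) (Fin n) ℝ) : 0 ≤ opNorm A :=
  le_trans (singVals_nonneg A ⟨0, hn⟩) (singVals_le_opNorm A ⟨0, hn⟩)

def toE {n : ℕ} (x : Fin n → ℝ) : EuclideanSpace ℝ (Fin n) := WithLp.toLp 2 x

lemma inner_eq_dot {n : ℕ} (x y : EuclideanSpace ℝ (Fin n)) :
    (inner ℝ x y : ℝ) = (x : Fin n → ℝ) ⬝ᵥ (y : Fin n → ℝ) := by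
  simp [PiLp.inner_apply, RCLike.inner_apply, dotProduct, mul_comm]

lemma norm_sq_eq_dot {n : ℕ} (x : EuclideanSpace ℝ (Fin n)) :
    ‖x‖ ^ 2 = (x : Fin n → ℝ) ⬝ᵥ (x : Fin n → ℝ) := by
  rw [← real_inner_self_eq_norm_sq, inner_eq_dot]

lemma mulVec_dot {n : ℕ} (A : Matrix (Fin n) (Fin n) ℝ) (x y : Fin n → ℝ) :
    (A *ᵥ x) ⬝ᵥ y = x ⬝ᵥ (Aᴴ *ᵥ y) :=
  calc (A *ᵥ x) ⬝ᵥ y = y ⬝ᵥ (A *ᵥ x) := dotProduct_comm _ _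
  _ = (y ᵥ* A) ⬝ᵥ x := dotProduct_mulVec _ _ _
  _ = x ⬝ᵥ (y ᵥ* A) := dotProduct_comm _ _
  _ = x ⬝ᵥ (Aᴴ *ᵥ y) := by rw [conjTranspose_eq_transpose_of_trivial, mulVec_transpose]

lemma dot_mulVec {n : ℕ} (A : Matrix (Fin n) (Fin n) ℝ) (x y : Fin n → ℝ) :
    x ⬝ᵥ (A *ᵥ y) = (Aᴴ *ᵥ x) ⬝ᵥ y := by
  rw [dotProduct_comm, mulVec_dot, dotProduct_comm]

lemma norm_mulVec_le {n : ℕ} (hn : 0 < n) (B : Matrix (Fin n) (Fin n) ℝ)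
    (x : EuclideanSpace ℝ (Fin n)) :
    ‖toE (B *ᵥ x)‖ ≤ opNorm B * ‖x‖ := by
  set h := Matrix.posSemidef_conjTranspose_mul_self B with hh
  set R := h.sqrt with hRdef
  have hR : R.PosSemidef := h.posSemidef_sqrt
  have hRh : R.IsHermitian := hR.1
  set w : Fin n → EuclideanSpace ℝ (Fin n) := fun i => hRh.eigenvectorBasis i with hw
  have hmul : ∀ i, (R *ᵥ (w i : Fin n → ℝ)) = hRh.eigenvalues i • (w i : Fin n → ℝ) :=
    fun i => hRh.mulVec_eigenvectorBasis i
  have hsing : ∀ i, hRh.eigenvalues i = singVals B i := fun i => rfl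
  have key : ‖toE (B *ᵥ x)‖ ^ 2 = ‖toE (R *ᵥ x)‖ ^ 2 := by
    rw [norm_sq_eq_dot, norm_sq_eq_dot]
    show (B *ᵥ x) ⬝ᵥ (B *ᵥ x) = (R *ᵥ x) ⬝ᵥ (R *ᵥ x)
    rw [mulVec_dot, mulVec_mulVec, mulVec_dot, mulVec_mulVec, hRh, h.sqrt_mul_self]
  have parseval : ∀ (y : EuclideanSpace ℝ (Fin n)),
      ∑ i, (inner ℝ (w i) y : ℝ) ^ 2 = ‖y‖ ^ 2 := by
    intro y
    have h2 := hRh.eigenvectorBasis.sum_inner_mul_inner y y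
    rw [real_inner_self_eq_norm_sq] at h2
    rw [← h2]
    congr 1; funext i
    rw [pow_two, real_inner_comm]
  have hwRx : ∀ i, (inner ℝ (w i) (toE (R *ᵥ x)) : ℝ)
      = hRh.eigenvalues i * (inner ℝ (w i) x : ℝ) := by
    intro i
    rw [inner_eq_dot, inner_eq_dot]
    show (w i : Fin n → ℝ) ⬝ᵥ (R *ᵥ x) = _
    have hsym : (R *ᵥ (w i : Fin n → ℝ)) ⬝ᵥ (x : Fin n → ℝ)
        = (w i : Fin n → ℝ) ⬝ᵥ (R *ᵥ x) := by
      rw [mulVec_dot, hRh.eq]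
    rw [← hsym, hmul i, smul_dotProduct]
    rfl
  have hb : ‖toE (R *ᵥ x)‖ ^ 2 ≤ (opNorm B * ‖x‖) ^ 2 := by
    rw [← parseval (toE (R *ᵥ x))]
    calc ∑ i, (inner ℝ (w i) (toE (R *ᵥ x)) : ℝ) ^ 2
        = ∑ i, (hRh.eigenvalues i) ^ 2 * (inner ℝ (w i) x : ℝ) ^ 2 := by
          congr 1; funext i; rw [hwRx i, mul_pow]
      _ ≤ ∑ i, (opNorm B) ^ 2 * (inner ℝ (w i) x : ℝ) ^ 2 := by
          apply Finset.sum_le_sum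
          intro i _
          apply mul_le_mul_of_nonneg_right _ (sq_nonneg _)
          have h1 := singVals_nonneg B i
          have h2 := singVals_le_opNorm B i
          rw [hsing i]
          exact pow_le_pow_left₀ h1 h2 2
      _ = (opNorm B) ^ 2 * ∑ i, (inner ℝ (w i) x : ℝ) ^ 2 := by rw [Finset.mul_sum]
      _ = (opNorm B) ^ 2 * ‖x‖ ^ 2 := by rw [parseval x]
      _ = (opNorm B * ‖x‖) ^ 2 := by ring
  have hfin := key.trans_le hb
  have h0 : (0:ℝ) ≤ opNorm B * ‖x‖ := mul_nonneg (opNorm_nonneg hn B) (norm_nonneg x)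
  nlinarith [norm_nonneg (toE (B *ᵥ x))]

lemma bessel_cols {n : ℕ} {ι : Type} (M : Matrix (Fin n) (Fin n) ℝ)
    (g : ι → EuclideanSpace ℝ (Fin n)) (hg : Orthonormal ℝ g) (s : Finset ι) :
    ∑ i ∈ s, ‖toE (Mᴴ *ᵥ (g i : Fin n → ℝ))‖ ^ 2 ≤ (Mᴴ * M).trace := by
  have hentry : ∀ (i : ι), ‖toE (Mᴴ *ᵥ (g i : Fin n → ℝ))‖ ^ 2
      = ∑ j, (inner ℝ (g i) (toE (fun k => M k j)) : ℝ) ^ 2 := by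
    intro i
    rw [norm_sq_eq_dot]
    show (Mᴴ *ᵥ (g i : Fin n → ℝ)) ⬝ᵥ (Mᴴ *ᵥ (g i : Fin n → ℝ)) = _
    rw [dotProduct]
    refine Finset.sum_congr rfl fun j _ => ?_
    have hj : (Mᴴ *ᵥ (g i : Fin n → ℝ)) j = (inner ℝ (g i) (toE (fun k => M k j)) : ℝ) := by
      rw [inner_eq_dot]
      show _ = (g i : Fin n → ℝ) ⬝ᵥ (fun k => M k j)
      simp [mulVec, dotProduct, conjTranspose_apply, mul_comm]
    rw [hj, pow_two]
  calc ∑ i ∈ s, ‖toE (Mᴴ *ᵥ (g i : Fin n → ℝ))‖ ^ 2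
      = ∑ i ∈ s, ∑ j, (inner ℝ (g i) (toE (fun k => M k j)) : ℝ) ^ 2 :=
        Finset.sum_congr rfl fun i _ => hentry i
    _ = ∑ j, ∑ i ∈ s, (inner ℝ (g i) (toE (fun k => M k j)) : ℝ) ^ 2 := Finset.sum_comm
    _ ≤ ∑ j : Fin n, ‖toE (fun k => M k j)‖ ^ 2 := by
        refine Finset.sum_le_sum fun j _ => ?_
        have hb := hg.sum_inner_products_le (toE (fun k => M k j)) (s := s)
        simpa [Real.norm_eq_abs, sq_abs] using hb
    _ = (Mᴴ * M).trace := by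
        simp [Matrix.trace, Matrix.diag, Matrix.mul_apply, norm_sq_eq_dot, dotProduct,
          Matrix.conjTranspose_apply, toE]

lemma key_ineq {n : ℕ} (M B : Matrix (Fin n) (Fin n) ℝ) :
    traceNorm (M * B * Mᴴ) ≤ (Mᴴ * M).trace * opNorm B := by
  classical
  rcases Nat.eq_zero_or_pos n with hn | hn
  · subst hn
    simp [traceNorm_eq_sum_sqrt, Matrix.trace]
  set S := M * B * Mᴴ with hS
  set h := Matrix.posSemidef_conjTranspose_mul_self S with hh
  set hH := h.1 with hhH
  set v : Fin n → EuclideanSpace ℝ (Fin n) := fun i => hH.eigenvectorBasis i with hv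
  set μ := hH.eigenvalues with hμ
  have hmulv : ∀ i, ((Sᴴ * S) *ᵥ (v i : Fin n → ℝ)) = μ i • (v i : Fin n → ℝ) :=
    fun i => hH.mulVec_eigenvectorBasis i
  have hortho : Orthonormal ℝ v := hH.eigenvectorBasis.orthonormal
  set f : Fin n → EuclideanSpace ℝ (Fin n) := fun i => toE (S *ᵥ (v i : Fin n → ℝ)) with hf
  -- inner products of the f's
  have hdot_f : ∀ i j, (inner ℝ (f i) (f j) : ℝ) = if i = j then μ j else 0 := by
    intro i j
    rw [inner_eq_dot]
    show (S *ᵥ (v i : Fin n → ℝ)) ⬝ᵥ (S *ᵥ (v j : Fin n → ℝ)) = _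
    rw [mulVec_dot, mulVec_mulVec, hmulv j, dotProduct_smul]
    have ho := orthonormal_iff_ite.mp hortho i j
    rw [inner_eq_dot] at ho
    rw [ho]
    split <;> simp
  have hnf : ∀ i, ‖f i‖ ^ 2 = μ i := by
    intro i
    rw [← real_inner_self_eq_norm_sq, hdot_f i i, if_pos rfl]
  have htn : traceNorm S = ∑ i, ‖f i‖ := by
    rw [traceNorm_eq_sum_sqrt]
    refine Finset.sum_congr rfl fun i _ => ?_
    show Real.sqrt (μ i) = ‖f i‖
    rw [← hnf i, Real.sqrt_sq (norm_nonneg _)]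
  set T : Finset (Fin n) := Finset.univ.filter (fun i => f i ≠ 0) with hT
  have hsumT : ∑ i, ‖f i‖ = ∑ i ∈ T, ‖f i‖ := by
    symm
    apply Finset.sum_filter_of_ne
    intro i _ hni
    intro hfz
    exact hni (by rw [hfz, norm_zero])
  set u : Fin n → EuclideanSpace ℝ (Fin n) := fun i => (‖f i‖⁻¹ : ℝ) • f i with hu
  have hu_orth : Orthonormal ℝ (fun i : {i : Fin n // f i ≠ 0} => u i.1) := by
    rw [orthonormal_iff_ite]
    intro i j
    have : (inner ℝ (u i.1) (u j.1) : ℝ) = ‖f i.1‖⁻¹ * (‖f j.1‖⁻¹ * inner ℝ (f i.1) (f j.1)) := by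
      simp only [hu, real_inner_smul_left, real_inner_smul_right]
      ring
    rw [this, hdot_f]
    by_cases hij : i = j
    · subst hij
      rw [if_pos rfl, if_pos rfl]
      have hfi : ‖f i.1‖ ≠ 0 := norm_ne_zero_iff.mpr i.2
      rw [← hnf i.1]
      field_simp
    · rw [if_neg hij, if_neg (fun hc => hij (Subtype.ext hc))]
      ring
  -- pointwise identity on T
  have hterm : ∀ i ∈ T, ‖f i‖ = (inner ℝ (toE (Mᴴ *ᵥ (u i : Fin n → ℝ)))
      (toE (B *ᵥ (Mᴴ *ᵥ (v i : Fin n → ℝ)))) : ℝ) := by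
    intro i hi
    have hfi : f i ≠ 0 := (Finset.mem_filter.mp hi).2
    have hfin : ‖f i‖ ≠ 0 := norm_ne_zero_iff.mpr hfi
    have h1 : (inner ℝ (u i) (f i) : ℝ) = ‖f i‖ := by
      rw [hu]
      simp only [real_inner_smul_left]
      rw [real_inner_self_eq_norm_sq]
      field_simp
    rw [← h1, inner_eq_dot, inner_eq_dot]
    show (u i : Fin n → ℝ) ⬝ᵥ (S *ᵥ (v i : Fin n → ℝ))
        = (Mᴴ *ᵥ (u i : Fin n → ℝ)) ⬝ᵥ (B *ᵥ (Mᴴ *ᵥ (v i : Fin n → ℝ)))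
    rw [hS, ← mulVec_mulVec, ← mulVec_mulVec, dot_mulVec]
  -- the bound
  set c := opNorm B with hc
  have hcnn : 0 ≤ c := opNorm_nonneg hn B
  have hstep : ∀ i ∈ T, (inner ℝ (toE (Mᴴ *ᵥ (u i : Fin n → ℝ)))
      (toE (B *ᵥ (Mᴴ *ᵥ (v i : Fin n → ℝ)))) : ℝ)
      ≤ ‖toE (Mᴴ *ᵥ (u i : Fin n → ℝ))‖ * (c * ‖toE (Mᴴ *ᵥ (v i : Fin n → ℝ))‖) := by
    intro i _
    refine le_trans (real_inner_le_norm _ _) ?_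
    apply mul_le_mul_of_nonneg_left _ (norm_nonneg _)
    exact norm_mulVec_le hn B (toE (Mᴴ *ᵥ (v i : Fin n → ℝ)))
  set t := (Mᴴ * M).trace with ht
  have hbv : ∑ i ∈ T, ‖toE (Mᴴ *ᵥ (v i : Fin n → ℝ))‖ ^ 2 ≤ t :=
    bessel_cols M v hortho T
  have hbu : ∑ i ∈ T, ‖toE (Mᴴ *ᵥ (u i : Fin n → ℝ))‖ ^ 2 ≤ t := by
    have hbs := bessel_cols M (fun i : {i : Fin n // f i ≠ 0} => u i.1) hu_orth Finset.univ
    calc ∑ i ∈ T, ‖toE (Mᴴ *ᵥ (u i : Fin n → ℝ))‖ ^ 2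
        = ∑ i : {i : Fin n // f i ≠ 0}, ‖toE (Mᴴ *ᵥ (u i.1 : Fin n → ℝ))‖ ^ 2 :=
          Finset.sum_subtype T (fun i => by simp [hT]) (fun i => ‖toE (Mᴴ *ᵥ (u i : Fin n → ℝ))‖ ^ 2)
      _ ≤ t := hbs
  have htnn : 0 ≤ t := le_trans (Finset.sum_nonneg fun i _ => sq_nonneg _) hbv
  have hcs : ∑ i ∈ T, ‖toE (Mᴴ *ᵥ (u i : Fin n → ℝ))‖ * ‖toE (Mᴴ *ᵥ (v i : Fin n → ℝ))‖ ≤ t := by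
    have h2 := Finset.sum_mul_sq_le_sq_mul_sq T
      (fun i => ‖toE (Mᴴ *ᵥ (u i : Fin n → ℝ))‖) (fun i => ‖toE (Mᴴ *ᵥ (v i : Fin n → ℝ))‖)
    have hnn : 0 ≤ ∑ i ∈ T, ‖toE (Mᴴ *ᵥ (u i : Fin n → ℝ))‖ * ‖toE (Mᴴ *ᵥ (v i : Fin n → ℝ))‖ :=
      Finset.sum_nonneg fun i _ => mul_nonneg (norm_nonneg _) (norm_nonneg _)
    nlinarith [Finset.sum_nonneg (fun i (_ : i ∈ T) => sq_nonneg ‖toE (Mᴴ *ᵥ (u i : Fin n → ℝ))‖),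
      Finset.sum_nonneg (fun i (_ : i ∈ T) => sq_nonneg ‖toE (Mᴴ *ᵥ (v i : Fin n → ℝ))‖)]
  calc traceNorm S = ∑ i ∈ T, ‖f i‖ := by rw [htn, hsumT]
    _ ≤ ∑ i ∈ T, ‖toE (Mᴴ *ᵥ (u i : Fin n → ℝ))‖ * (c * ‖toE (Mᴴ *ᵥ (v i : Fin n → ℝ))‖) := by
        refine Finset.sum_le_sum fun i hi => ?_
        rw [hterm i hi]
        exact hstep i hi
    _ = c * ∑ i ∈ T, ‖toE (Mᴴ *ᵥ (u i : Fin n → ℝ))‖ * ‖toE (Mᴴ *ᵥ (v i : Fin n → ℝ))‖ := by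
        rw [Finset.mul_sum]
        refine Finset.sum_congr rfl fun i _ => by ring
    _ ≤ c * t := mul_le_mul_of_nonneg_left hcs hcnn
    _ = t * c := mul_comm _ _

/-- Hölder-type inequality: ‖√W Q⁻¹ U Q⁻¹ √W‖₁ ≤ ‖Q^{-1/2} W Q^{-1/2}‖₁ · ‖Q^{-1/2} U Q^{-1/2}‖_∞ -/
theorem traceNorm_holder {n : ℕ} (W Q U : Matrix (Fin n) (Fin n) ℝ)
    (hW : W.PosDef) (hQ : Q.PosDef) :
    traceNorm (mySqrt W * Q⁻¹ * U * Q⁻¹ * mySqrt W) ≤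
      traceNorm (mySqrt Q⁻¹ * W * mySqrt Q⁻¹) * opNorm (mySqrt Q⁻¹ * U * mySqrt Q⁻¹) := by
  have hQi : Q⁻¹.PosDef := hQ.inv
  set a := mySqrt W with hadef
  set b := mySqrt Q⁻¹ with hbdef
  have ha : a = hW.posSemidef.sqrt := dif_pos _
  have hb : b = hQi.posSemidef.sqrt := dif_pos _
  have haps : a.PosSemidef := by rw [ha]; exact Matrix.PosSemidef.posSemidef_sqrt _
  have hbps : b.PosSemidef := by rw [hb]; exact Matrix.PosSemidef.posSemidef_sqrt _
  have haH : aᴴ = a := haps.1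
  have hbH : bᴴ = b := hbps.1
  have haa : a * a = W := by rw [ha]; exact hW.posSemidef.sqrt_mul_self
  have hbb : b * b = Q⁻¹ := by rw [hb]; exact hQi.posSemidef.sqrt_mul_self
  set M := a * b with hM
  have hMH : Mᴴ = b * a := by rw [hM, conjTranspose_mul, haH, hbH]
  have hS : a * Q⁻¹ * U * Q⁻¹ * a = M * (b * U * b) * Mᴴ := by
    rw [hMH, hM, ← hbb]
    simp only [mul_assoc]
  have hMM : Mᴴ * M = b * W * b := by
    rw [hMH, hM, ← haa]
    simp only [mul_assoc]
  have hpsd : (b * W * b).PosSemidef := by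
    nth_rewrite 2 [← hbH]
    exact hW.posSemidef.mul_mul_conjTranspose_same b
  have htr : traceNorm (b * W * b) = (Mᴴ * M).trace := by
    rw [traceNorm_of_posSemidef hpsd, hMM]
  rw [hS, htr]
  exact key_ineq M (b * U * b)
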